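/- Let a ≥ 1, n = 2^a, and K ≥ 1. Suppose (A_{iI}, A_{iQ})_{i=1}^K are n×n complex matrices, all unitary, with A_{1I} = I_n, satisfying the SSD conditions, and suppose that for every i there is no real number c with A_{iQ} = c·A_{iI}. Then K ≤ 2a. Equivalently, the rate K/2^a of any 2^a × 2^a unitary-weight single-symbol-decodable code is at most a/2^{a−1}. -/

import Mathlib

open Matrix

set_option linter.unusedSectionVars false
set_option maxHeartbeats 1000000

open scoped symmDiff

namespace UWSSDAux

variable {m N : ℕ}

/-- Ordered Clifford monomial. -/
noncomputable def PP (G : Fin m → Matrix (Fin N) (Fin N) ℂ) (S : Finset (Fin m)) :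
    Matrix (Fin N) (Fin N) ℂ :=
  ((S.sort (· ≤ ·)).map G).prod

variable (G : Fin m → Matrix (Fin N) (Fin N) ℂ)

lemma PP_empty : PP G ∅ = 1 := by simp [PP]

lemma PP_singleton (j : Fin m) : PP G {j} = G j := by simp [PP]

lemma bne_fun_eq (k : Fin m) :
    (fun x : Fin m => x != k) = (fun x => decide (x ≠ k)) := by
  funext x; rw [Bool.eq_iff_iff]; simp

lemma filter_len_mem (S : Finset (Fin m)) (k : Fin m) (hk : k ∈ S) :
    ((S.sort (· ≤ ·)).filter (· ≠ k)).length = S.card - 1 := by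
  rw [← bne_fun_eq, ← List.Nodup.erase_eq_filter (Finset.sort_nodup _ _) k,
    List.length_erase_of_mem ((Finset.mem_sort _).2 hk), Finset.length_sort]

lemma filter_len_not_mem (S : Finset (Fin m)) (k : Fin m) (hk : k ∉ S) :
    ((S.sort (· ≤ ·)).filter (· ≠ k)).length = S.card := by
  rw [List.filter_eq_self.2, Finset.length_sort]
  intro x hx
  simp only [ne_eq, decide_eq_true_eq]
  rintro rfl
  exact hk ((Finset.mem_sort _).1 hx)

section anticomm
variable (hsq : ∀ j, G j * G j = 1)
    (hac : ∀ j k, j ≠ k → G j * G k = -(G k * G j))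

include hsq hac in
/-- Move `G k` past a list product, picking up a sign. -/
lemma mul_list_prod (k : Fin m) (l : List (Fin m)) :
    G k * (l.map G).prod =
      ((-1 : ℂ) ^ (l.filter (· ≠ k)).length) • ((l.map G).prod * G k) := by
  induction l with
  | nil => simp
  | cons j t ih =>
    simp only [List.map_cons, List.prod_cons, List.filter_cons]
    by_cases hjk : j = k
    · subst hjk
      simp only [ne_eq, not_true_eq_false, decide_false, Bool.false_eq_true, if_false]
      rw [show G j * (G j * (t.map G).prod) = G j * (G j * (t.map G).prod) from rfl]
      conv_lhs => rw [ih]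
      rw [mul_smul_comm, ← mul_assoc]
    · have hd : (decide ¬j = k) = true := by simp [hjk]
      simp only [ne_eq, hd, if_true, List.length_cons]
      rw [← mul_assoc, hac k j (Ne.symm hjk), neg_mul, mul_assoc, ih, mul_smul_comm,
        ← mul_assoc, pow_succ, mul_neg_one, neg_smul]

include hsq hac in
lemma prod_perm : ∀ {l₁ l₂ : List (Fin m)}, l₁.Perm l₂ → l₁.Nodup →
    ∃ c : ℂ, c ≠ 0 ∧ (l₁.map G).prod = c • (l₂.map G).prod := by
  intro l₁ l₂ h
  induction h with
  | nil => exact fun _ => ⟨1, one_ne_zero, by simp⟩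
  | cons x h ih =>
    intro hn
    obtain ⟨c, hc, e⟩ := ih hn.of_cons
    exact ⟨c, hc, by simp [List.prod_cons, e, mul_smul_comm]⟩
  | swap x y l =>
    intro hn
    have hxy : y ≠ x := by rintro rfl; simp at hn
    refine ⟨-1, by norm_num, ?_⟩
    simp only [List.map_cons, List.prod_cons]
    rw [← mul_assoc, hac y x hxy, neg_mul, mul_assoc, neg_one_smul]
  | trans h₁ h₂ ih₁ ih₂ =>
    intro hn
    obtain ⟨c₁, hc₁, e₁⟩ := ih₁ hn
    obtain ⟨c₂, hc₂, e₂⟩ := ih₂ (h₁.nodup hn)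
    exact ⟨c₁ * c₂, mul_ne_zero hc₁ hc₂, by rw [e₁, e₂, smul_smul]⟩

include hsq hac in
lemma prod_eq_PP (l : List (Fin m)) (hl : l.Nodup) :
    ∃ c : ℂ, c ≠ 0 ∧ (l.map G).prod = c • PP G l.toFinset := by
  have hperm : l.Perm (l.toFinset.sort (· ≤ ·)) :=
    List.perm_of_nodup_nodup_toFinset_eq hl (Finset.sort_nodup _ _)
      (by rw [Finset.sort_toFinset])
  exact prod_perm G hsq hac hperm hl

include hsq hac in
lemma PP_mul_single (S : Finset (Fin m)) (k : Fin m) :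
    ∃ c : ℂ, c ≠ 0 ∧ PP G S * G k = c • PP G (S ∆ {k}) := by
  by_cases hk : k ∈ S
  · have hSd : S ∆ {k} = S.erase k := by
      ext x
      simp only [Finset.mem_symmDiff, Finset.mem_singleton, Finset.mem_erase]
      constructor
      · rintro (⟨h1, h2⟩ | ⟨rfl, h2⟩)
        · exact ⟨h2, h1⟩
        · exact absurd hk h2
      · rintro ⟨h1, h2⟩; exact Or.inl ⟨h2, h1⟩
    have hl : ((S.erase k).sort (· ≤ ·) ++ [k]).Nodup := by
      rw [List.nodup_append]
      refine ⟨Finset.sort_nodup _ _, List.nodup_singleton _, ?_⟩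
      intro x hx
      simp only [List.mem_singleton]
      intro b hb hxb; rw [hb] at hxb; subst hxb
      exact (Finset.notMem_erase x S) ((Finset.mem_sort _).1 hx)
    obtain ⟨c, hc, e⟩ := prod_eq_PP G hsq hac _ hl
    have htf : ((S.erase k).sort (· ≤ ·) ++ [k]).toFinset = S := by
      ext x
      simp only [List.toFinset_append, Finset.mem_union, List.mem_toFinset,
        List.toFinset_cons, List.toFinset_nil, LawfulSingleton.insert_empty_eq, Finset.mem_insert,
        Finset.mem_singleton, Finset.mem_sort, Finset.mem_erase, List.mem_toFinset]
      constructor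
      · rintro (⟨_, h⟩ | rfl)
        · exact h
        · exact hk
      · intro hx
        by_cases hxk : x = k
        · exact Or.inr hxk
        · exact Or.inl ⟨hxk, hx⟩
    rw [htf] at e
    rw [List.map_append, List.prod_append] at e
    simp only [List.map_cons, List.map_nil, List.prod_cons, List.prod_nil, mul_one] at e
    have e' : PP G (S.erase k) * G k = c • PP G S := e
    refine ⟨c⁻¹, inv_ne_zero hc, ?_⟩
    rw [hSd]
    have hS : PP G S = c⁻¹ • (PP G (S.erase k) * G k) := by
      rw [e', smul_smul, inv_mul_cancel₀ hc, one_smul]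
    rw [hS, smul_mul_assoc, mul_assoc, hsq, mul_one]
  · have hSd : S ∆ {k} = insert k S := by
      ext x
      simp only [Finset.mem_symmDiff, Finset.mem_singleton, Finset.mem_insert]
      constructor
      · rintro (⟨h1, _⟩ | ⟨rfl, _⟩)
        · exact Or.inr h1
        · exact Or.inl rfl
      · rintro (rfl | hx)
        · exact Or.inr ⟨rfl, hk⟩
        · exact Or.inl ⟨hx, fun h => hk (h ▸ hx)⟩
    have hl : (S.sort (· ≤ ·) ++ [k]).Nodup := by
      rw [List.nodup_append]
      refine ⟨Finset.sort_nodup _ _, List.nodup_singleton _, ?_⟩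
      intro x hx
      simp only [List.mem_singleton]
      intro b hb hxb; rw [hb] at hxb; subst hxb
      exact hk ((Finset.mem_sort _).1 hx)
    obtain ⟨c, hc, e⟩ := prod_eq_PP G hsq hac _ hl
    have htf : (S.sort (· ≤ ·) ++ [k]).toFinset = insert k S := by
      ext x
      simp only [List.toFinset_append, Finset.mem_union, List.mem_toFinset,
        List.toFinset_cons, List.toFinset_nil, LawfulSingleton.insert_empty_eq, Finset.mem_insert,
        Finset.mem_singleton, Finset.mem_sort]
      tauto
    rw [htf] at e
    rw [List.map_append, List.prod_append] at e
    simp only [List.map_cons, List.map_nil, List.prod_cons, List.prod_nil, mul_one] at e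
    exact ⟨c, hc, by rw [hSd]; exact e⟩

include hsq hac in
lemma PP_mul_PP (S T : Finset (Fin m)) :
    ∃ c : ℂ, c ≠ 0 ∧ PP G S * PP G T = c • PP G (S ∆ T) := by
  induction T using Finset.induction generalizing S with
  | empty =>
    have h0 : S ∆ (∅ : Finset (Fin m)) = S := by
      rw [← Finset.bot_eq_empty, symmDiff_bot]
    exact ⟨1, one_ne_zero, by rw [PP_empty, mul_one, h0, one_smul]⟩
  | @insert k T' hk ih =>
    have hins : T' ∆ {k} = insert k T' := by
      ext x
      simp only [Finset.mem_symmDiff, Finset.mem_singleton, Finset.mem_insert]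
      constructor
      · rintro (⟨h1, _⟩ | ⟨rfl, _⟩)
        · exact Or.inr h1
        · exact Or.inl rfl
      · rintro (rfl | hx)
        · exact Or.inr ⟨rfl, hk⟩
        · exact Or.inl ⟨hx, fun h => hk (h ▸ hx)⟩
    obtain ⟨c1, hc1, e1⟩ := PP_mul_single G hsq hac T' k
    rw [hins] at e1
    obtain ⟨c2, hc2, e2⟩ := ih S
    obtain ⟨c3, hc3, e3⟩ := PP_mul_single G hsq hac (S ∆ T') k
    have hPPins : PP G (insert k T') = c1⁻¹ • (PP G T' * G k) := by
      rw [e1, smul_smul, inv_mul_cancel₀ hc1, one_smul]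
    refine ⟨c1⁻¹ * c2 * c3, by simp [hc1, hc2, hc3], ?_⟩
    rw [hPPins, mul_smul_comm, ← mul_assoc, e2, smul_mul_assoc, e3, smul_smul, smul_smul,
      symmDiff_assoc, hins]

include hsq hac in
lemma trace_PP_zero (hm : Even m) (S : Finset (Fin m)) (hS : S ≠ ∅) :
    trace (PP G S) = 0 := by
  -- find k with G k * PP S = -(PP S * G k)
  obtain ⟨k, hodd⟩ :
      ∃ k : Fin m, Odd (((S.sort (· ≤ ·)).filter (· ≠ k)).length) := by
    rcases Nat.even_or_odd S.card with he | ho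
    · obtain ⟨k, hk⟩ := Finset.nonempty_iff_ne_empty.2 hS
      refine ⟨k, ?_⟩
      rw [filter_len_mem S k hk]
      have h1 : 1 ≤ S.card := Finset.card_pos.2 ⟨k, hk⟩
      exact Nat.Even.sub_odd h1 he odd_one
    · have hne : S ≠ Finset.univ := by
        rintro rfl
        rw [Finset.card_univ, Fintype.card_fin] at ho
        exact (Nat.not_odd_iff_even.2 hm) ho
      obtain ⟨k, hk⟩ : ∃ k, k ∉ S := by
        by_contra h
        push_neg at h
        exact hne (Finset.eq_univ_iff_forall.2 h)
      refine ⟨k, ?_⟩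
      rw [filter_len_not_mem S k hk]
      exact ho
  have hcomm : G k * PP G S = -(PP G S * G k) := by
    rw [PP, mul_list_prod G hsq hac k, hodd.neg_one_pow, neg_smul, one_smul]
  have h1 : trace (PP G S) = -trace (PP G S) := by
    conv_lhs => rw [← one_mul (PP G S), ← hsq k, mul_assoc, hcomm]
    rw [mul_neg, trace_neg, ← mul_assoc, trace_mul_comm, ← mul_assoc, hsq k, one_mul]
  have h2 : (2 : ℂ) * trace (PP G S) = 0 := by
    rw [two_mul]
    nth_rewrite 1 [h1]
    ring
  simpa using h2

include hsq hac in
lemma PP_linearIndependent (hm : Even m) (hN : 0 < N) :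
    LinearIndependent ℂ (fun S : Finset (Fin m) => PP G S) := by
  rw [linearIndependent_iff']
  intro s g hsum T hT
  have h0 : trace (PP G T * ∑ S ∈ s, g S • PP G S) = 0 := by rw [hsum, mul_zero, trace_zero]
  rw [Finset.mul_sum] at h0
  simp only [mul_smul_comm] at h0
  rw [trace_sum] at h0
  simp only [trace_smul, smul_eq_mul] at h0
  rw [Finset.sum_eq_single_of_mem T hT] at h0
  · obtain ⟨c, hc, e⟩ := PP_mul_PP G hsq hac T T
    rw [symmDiff_self, Finset.bot_eq_empty, PP_empty] at e
    rw [e, trace_smul, trace_one, smul_eq_mul] at h0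
    have hcard : (Fintype.card (Fin N) : ℂ) ≠ 0 := by
      simp only [Fintype.card_fin]
      exact_mod_cast hN.ne'
    rcases mul_eq_zero.1 h0 with h | h
    · exact h
    · exact absurd h (mul_ne_zero hc hcard)
  · intro S hS hST
    obtain ⟨c, hc, e⟩ := PP_mul_PP G hsq hac T S
    have hne : T ∆ S ≠ ∅ := fun h => hST (Finset.symmDiff_eq_empty.1 h).symm
    rw [e, trace_smul, trace_PP_zero G hsq hac hm _ hne, smul_zero, mul_zero]

include hsq hac in
lemma G_mul_PP (k : Fin m) (S : Finset (Fin m)) :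
    G k * PP G S =
      ((-1 : ℂ) ^ ((S.sort (· ≤ ·)).filter (· ≠ k)).length) • (PP G S * G k) :=
  mul_list_prod G hsq hac k (S.sort (· ≤ ·))

include hsq hac in
lemma anticommutant (hm : Even m) (hN : 0 < N) (hNm : N * N = 2 ^ m)
    (j₀ : Fin m) (X : Matrix (Fin N) (Fin N) ℂ)
    (hX : ∀ k, k ≠ j₀ → G k * X = -(X * G k)) :
    ∃ α β : ℂ, X = α • G j₀ + β • PP G Finset.univ := by
  have li := PP_linearIndependent G hsq hac hm hN
  have hcard : Fintype.card (Finset (Fin m)) =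
      Module.finrank ℂ (Matrix (Fin N) (Fin N) ℂ) := by
    rw [Fintype.card_finset, Fintype.card_fin, Module.finrank_matrix, Fintype.card_fin,
      Module.finrank_self, mul_one, hNm]
  let B := basisOfLinearIndependentOfCardEqFinrank li hcard
  have hB : ⇑B = fun S => PP G S := coe_basisOfLinearIndependentOfCardEqFinrank _ _
  set cc : Finset (Fin m) → ℂ := fun S => B.repr X S with hcc
  have hXsum : X = ∑ S : Finset (Fin m), cc S • PP G S := by
    conv_lhs => rw [← B.sum_repr X]
    simp [hB, hcc]
  set e : Fin m → Finset (Fin m) → ℕ :=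
    fun k S => ((S.sort (· ≤ ·)).filter (· ≠ k)).length with he
  have hzero : ∀ S : Finset (Fin m), S ≠ {j₀} → S ≠ Finset.univ → cc S = 0 := by
    intro S hS1 hS2
    obtain ⟨k, hkj, heven⟩ : ∃ k, k ≠ j₀ ∧ Even (e k S) := by
      rcases Nat.even_or_odd S.card with hev | ho
      · obtain ⟨k, hk, hkj⟩ : ∃ k, k ∉ S ∧ k ≠ j₀ := by
          by_contra h
          push_neg at h
          have hsub : Finset.univ \ S ⊆ {j₀} := by
            intro x hx
            rw [Finset.mem_sdiff] at hx
            rw [Finset.mem_singleton]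
            exact h x hx.2
          have h1 : (Finset.univ \ S).card ≤ 1 := by
            simpa using Finset.card_le_card hsub
          have h2 : (Finset.univ \ S).card = m - S.card := by
            rw [Finset.card_sdiff_of_subset (Finset.subset_univ S), Finset.card_univ, Fintype.card_fin]
          have hlt : S.card < m := by
            rcases lt_or_eq_of_le (by simpa using Finset.card_le_univ S) with h | h
            · simpa using h
            · exact absurd ((Finset.card_eq_iff_eq_univ S).1 (by simpa using h)) hS2
          rcases hev with ⟨p, hp⟩
          rcases hm with ⟨q, hq⟩
          omega
        exact ⟨k, hkj, by rw [he]; simp only; rw [filter_len_not_mem S k hk]; exact hev⟩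
      · obtain ⟨k, hk, hkj⟩ : ∃ k, k ∈ S ∧ k ≠ j₀ := by
          by_contra h
          push_neg at h
          have hsub : S ⊆ {j₀} := fun x hx => Finset.mem_singleton.2 (h x hx)
          have h1 : S.card ≤ 1 := by simpa using Finset.card_le_card hsub
          have hc1 : S.card = 1 := by rcases ho with ⟨p, hp⟩; omega
          obtain ⟨x, rfl⟩ := Finset.card_eq_one.1 hc1
          have := hsub (Finset.mem_singleton_self x)
          rw [Finset.mem_singleton] at this
          exact hS1 (by rw [this])
        refine ⟨k, hkj, ?_⟩
        rw [he]; simp only; rw [filter_len_mem S k hk]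
        rcases ho with ⟨p, hp⟩
        exact ⟨p, by omega⟩
    have hA : G k * X = (∑ S', (cc S' * (-1 : ℂ) ^ (e k S')) • PP G S') * G k := by
      conv_lhs => rw [hXsum]
      rw [Finset.mul_sum, Finset.sum_mul]
      refine Finset.sum_congr rfl fun S' _ => ?_
      rw [mul_smul_comm, G_mul_PP G hsq hac k S', smul_smul, smul_mul_assoc, mul_comm (cc S')]
    have hBe : X * G k = (∑ S', cc S' • PP G S') * G k := by rw [← hXsum]
    have h2 : (∑ S', (cc S' * ((-1 : ℂ) ^ (e k S') + 1)) • PP G S') * G k =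
        G k * X + X * G k := by
      rw [hA, hBe, ← add_mul, ← Finset.sum_add_distrib]
      congr 1
      refine Finset.sum_congr rfl fun S' _ => ?_
      rw [mul_add, mul_one, add_smul]
    have h3 : (∑ S', (cc S' * ((-1 : ℂ) ^ (e k S') + 1)) • PP G S') * G k = 0 := by
      rw [h2, hX k hkj, neg_add_cancel]
    have h4 : (∑ S', (cc S' * ((-1 : ℂ) ^ (e k S') + 1)) • PP G S') = 0 := by
      have h5 := congrArg (· * G k) h3
      simp only [zero_mul] at h5
      rwa [mul_assoc, hsq, mul_one] at h5
    have h6 := linearIndependent_iff'.1 li Finset.univ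
      (fun S' => cc S' * ((-1 : ℂ) ^ (e k S') + 1)) (by simpa using h4) S (Finset.mem_univ S)
    have h6' : cc S * ((-1 : ℂ) ^ (e k S) + 1) = 0 := h6
    rw [heven.neg_one_pow] at h6'
    have : (1 : ℂ) + 1 ≠ 0 := by norm_num
    rcases mul_eq_zero.1 h6' with h | h
    · exact h
    · exact absurd h this
  refine ⟨cc {j₀}, cc Finset.univ, ?_⟩
  rw [hXsum]
  have hpair : ∑ S : Finset (Fin m), cc S • PP G S =
      ∑ S ∈ ({{j₀}, Finset.univ} : Finset (Finset (Fin m))), cc S • PP G S := by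
    symm
    apply Finset.sum_subset (Finset.subset_univ _)
    intro S _ hS
    simp only [Finset.mem_insert, Finset.mem_singleton] at hS
    push_neg at hS
    rw [hzero S hS.1 hS.2, zero_smul]
  have hne : ({j₀} : Finset (Fin m)) ≠ Finset.univ := by
    intro h
    have h1 : (Finset.univ : Finset (Fin m)).card = 1 := by rw [← h]; simp
    rw [Finset.card_univ, Fintype.card_fin] at h1
    have hm2 : m ≠ 1 := by rcases hm with ⟨q, hq⟩; omega
    exact hm2 h1
  rw [hpair, Finset.sum_pair hne, PP_singleton]

end anticomm

theorem key (a : ℕ) (ha : 1 ≤ a)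
    (G H : Fin (2 * a) → Matrix (Fin (2 ^ a)) (Fin (2 ^ a)) ℂ)
    (hG2 : ∀ j, G j * G j = 1) (hH2 : ∀ j, H j * H j = 1)
    (hGG : ∀ j k, j ≠ k → G j * G k = -(G k * G j))
    (hHH : ∀ j k, j ≠ k → H j * H k = -(H k * H j))
    (hGH : ∀ j k, j ≠ k → G j * H k = -(H k * G j)) :
    ∃ (j : Fin (2 * a)) (c : ℂ), (c = 1 ∨ c = -1) ∧ H j = c • G j := by
  have hm : Even (2 * a) := even_two_mul a
  have hN : 0 < 2 ^ a := pow_pos (by norm_num) a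
  have hNm : 2 ^ a * 2 ^ a = 2 ^ (2 * a) := by rw [← pow_add]; ring_nf
  have hdec : ∀ j, ∃ α β : ℂ, H j = α • G j + β • PP G Finset.univ := by
    intro j
    exact anticommutant G hG2 hGG hm hN hNm j (H j) (fun k hkj => hGH k j hkj)
  choose α β hαβ using hdec
  set W := PP G Finset.univ with hW
  obtain ⟨cW, hcW, hWW⟩ := PP_mul_PP G hG2 hGG Finset.univ Finset.univ
  rw [symmDiff_self, Finset.bot_eq_empty, PP_empty] at hWW
  have hGW : ∀ j, G j * W = -(W * G j) := by
    intro j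
    rw [hW, G_mul_PP G hG2 hGG j Finset.univ]
    have hodd : Odd ((((Finset.univ : Finset (Fin (2*a))).sort (· ≤ ·)).filter
        (· ≠ j)).length) := by
      rw [filter_len_mem _ j (Finset.mem_univ j), Finset.card_univ, Fintype.card_fin]
      exact Nat.Even.sub_odd (by omega) hm odd_one
    rw [hodd.neg_one_pow, neg_one_smul]
  have htr1 : trace (1 : Matrix (Fin (2 ^ a)) (Fin (2 ^ a)) ℂ) = ((2 ^ a : ℕ) : ℂ) := by
    rw [trace_one]; simp
  have hNc : ((2 ^ a : ℕ) : ℂ) ≠ 0 := by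
    exact_mod_cast Nat.cast_ne_zero.2 hN.ne'
  have hscalar : ∀ x : ℂ, x • (1 : Matrix (Fin (2 ^ a)) (Fin (2 ^ a)) ℂ) = 0 → x = 0 := by
    intro x hx
    have h := congrArg trace hx
    rw [trace_smul, htr1, trace_zero, smul_eq_mul] at h
    exact (mul_eq_zero.1 h).resolve_right hNc
  have hββ : ∀ j k, j ≠ k → β j * β k = 0 := by
    intro j k hjk
    have h0 : H j * H k + H k * H j = 0 := by rw [hHH j k hjk]; exact neg_add_cancel _
    rw [hαβ j, hαβ k] at h0
    have hexp : (α j • G j + β j • W) * (α k • G k + β k • W) +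
        (α k • G k + β k • W) * (α j • G j + β j • W) =
        ((2 : ℂ) * (β j * β k)) • (W * W) := by
      have e1 : G j * G k = -(G k * G j) := hGG j k hjk
      have e2 : G j * W = -(W * G j) := hGW j
      have e3 : G k * W = -(W * G k) := hGW k
      simp only [mul_add, add_mul, smul_mul_assoc, mul_smul_comm, smul_smul]
      rw [e1, e2, e3]
      module
    rw [hexp, hWW, smul_smul] at h0
    have h1 := hscalar _ h0
    rcases mul_eq_zero.1 h1 with h | h
    · rcases mul_eq_zero.1 h with h' | h'
      · exact absurd h' two_ne_zero
      · exact h'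
    · exact absurd h hcW
  have h01 : (⟨0, by omega⟩ : Fin (2 * a)) ≠ ⟨1, by omega⟩ := by
    intro h
    simpa using congrArg Fin.val h
  obtain ⟨j, hjβ⟩ : ∃ j, β j = 0 := by
    rcases mul_eq_zero.1 (hββ _ _ h01) with h | h
    exacts [⟨_, h⟩, ⟨_, h⟩]
  have hHj : H j = α j • G j := by rw [hαβ j, hjβ, zero_smul, add_zero]
  have hα2 : α j * α j = 1 := by
    have h1 := hH2 j
    rw [hHj, smul_mul_assoc, mul_smul_comm, smul_smul, hG2 j] at h1
    have h2 := congrArg trace h1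
    rw [trace_smul, htr1, smul_eq_mul] at h2
    exact mul_right_cancel₀ hNc (by rw [h2, one_mul])
  have hα : α j = 1 ∨ α j = -1 := by
    have hfac : (α j - 1) * (α j + 1) = 0 := by linear_combination hα2
    rcases mul_eq_zero.1 hfac with h | h
    · exact Or.inl (sub_eq_zero.1 h)
    · exact Or.inr (eq_neg_of_add_eq_zero_left h)
  exact ⟨j, α j, hα, hHj⟩

end UWSSDAux

open UWSSDAux

/-- The SSD conditions on a family of weight-matrix pairs. -/
def SSDConds {n K : ℕ} (AI AQ : Fin K → Matrix (Fin n) (Fin n) ℂ) : Prop :=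
  ∀ i j : Fin K, i ≠ j →
    (AI i)ᴴ * AQ j + (AQ j)ᴴ * AI i = 0 ∧
    (AI i)ᴴ * AI j + (AI j)ᴴ * AI i = 0 ∧
    (AQ i)ᴴ * AQ j + (AQ j)ᴴ * AQ i = 0

/-- Upper bound on the rate of a `2^a × 2^a` unitary-weight SSD code: the
number `K` of complex variables is at most `2a`, i.e. the rate `K/2^a` is at
most `a/2^(a-1)`. -/
theorem uw_ssd_rate_upper_bound (a : ℕ) (ha : 1 ≤ a) {K : ℕ} (hK : 0 < K)
    (AI AQ : Fin K → Matrix (Fin (2 ^ a)) (Fin (2 ^ a)) ℂ)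
    (hUI : ∀ i, (AI i)ᴴ * AI i = 1) (hUQ : ∀ i, (AQ i)ᴴ * AQ i = 1)
    (h1 : AI ⟨0, hK⟩ = 1)
    (hSSD : SSDConds AI AQ)
    (hNP : ∀ i, ¬ ∃ c : ℝ, AQ i = (c : ℂ) • AI i) :
    K ≤ 2 * a ∧ (K : ℝ) / 2 ^ a ≤ a / 2 ^ (a - 1) := by
  have hKle : K ≤ 2 * a := by
    by_contra hgt
    push_neg at hgt
    set z : Fin K := ⟨0, hK⟩ with hz
    set ι : Fin (2 * a) → Fin K := fun j => ⟨j.1 + 1, by have := j.isLt; omega⟩ with hι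
    have hιz : ∀ j, ι j ≠ z := by
      intro j h
      have := congrArg Fin.val h
      simp [hι, hz] at this
    have hιinj : ∀ j k : Fin (2 * a), j ≠ k → ι j ≠ ι k := by
      intro j k hjk h
      have hv := congrArg Fin.val h
      simp only [hι] at hv
      exact hjk (Fin.ext (by omega))
    have hskewI : ∀ j : Fin (2 * a), (AI (ι j))ᴴ = -(AI (ι j)) := by
      intro j
      have h := (hSSD (ι j) z (hιz j)).2.1
      rw [hz] at h
      rw [h1, conjTranspose_one, mul_one, one_mul] at h
      exact eq_neg_of_add_eq_zero_left h
    have hskewQ : ∀ j : Fin (2 * a), (AQ (ι j))ᴴ = -(AQ (ι j)) := by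
      intro j
      have h := (hSSD z (ι j) (Ne.symm (hιz j))).1
      rw [hz] at h
      rw [h1, conjTranspose_one, mul_one, one_mul] at h
      exact eq_neg_of_add_eq_zero_right h
    have hsqI : ∀ j, AI (ι j) * AI (ι j) = -1 := by
      intro j
      have h := hUI (ι j)
      rw [hskewI j, neg_mul] at h
      exact neg_eq_iff_eq_neg.1 h
    have hsqQ : ∀ j, AQ (ι j) * AQ (ι j) = -1 := by
      intro j
      have h := hUQ (ι j)
      rw [hskewQ j, neg_mul] at h
      exact neg_eq_iff_eq_neg.1 h
    have hacII : ∀ j k : Fin (2 * a), j ≠ k →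
        AI (ι j) * AI (ι k) = -(AI (ι k) * AI (ι j)) := by
      intro j k hjk
      have h := (hSSD (ι j) (ι k) (hιinj j k hjk)).2.1
      rw [hskewI j, hskewI k, neg_mul, neg_mul, ← neg_add] at h
      exact eq_neg_of_add_eq_zero_left (neg_eq_zero.1 h)
    have hacQQ : ∀ j k : Fin (2 * a), j ≠ k →
        AQ (ι j) * AQ (ι k) = -(AQ (ι k) * AQ (ι j)) := by
      intro j k hjk
      have h := (hSSD (ι j) (ι k) (hιinj j k hjk)).2.2
      rw [hskewQ j, hskewQ k, neg_mul, neg_mul, ← neg_add] at h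
      exact eq_neg_of_add_eq_zero_left (neg_eq_zero.1 h)
    have hacIQ : ∀ j k : Fin (2 * a), j ≠ k →
        AI (ι j) * AQ (ι k) = -(AQ (ι k) * AI (ι j)) := by
      intro j k hjk
      have h := (hSSD (ι j) (ι k) (hιinj j k hjk)).1
      rw [hskewI j, hskewQ k, neg_mul, neg_mul, ← neg_add] at h
      exact eq_neg_of_add_eq_zero_left (neg_eq_zero.1 h)
    set G : Fin (2 * a) → Matrix (Fin (2 ^ a)) (Fin (2 ^ a)) ℂ :=
      fun j => Complex.I • AI (ι j) with hG
    set H : Fin (2 * a) → Matrix (Fin (2 ^ a)) (Fin (2 ^ a)) ℂ :=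
      fun j => Complex.I • AQ (ι j) with hH
    have hG2 : ∀ j, G j * G j = 1 := by
      intro j
      rw [hG]
      simp only [smul_mul_assoc, mul_smul_comm, smul_smul, Complex.I_mul_I, hsqI j]
      rw [neg_one_smul, neg_neg]
    have hH2 : ∀ j, H j * H j = 1 := by
      intro j
      rw [hH]
      simp only [smul_mul_assoc, mul_smul_comm, smul_smul, Complex.I_mul_I, hsqQ j]
      rw [neg_one_smul, neg_neg]
    have hGG : ∀ j k, j ≠ k → G j * G k = -(G k * G j) := by
      intro j k hjk
      rw [hG]
      simp only [smul_mul_assoc, mul_smul_comm, smul_smul, Complex.I_mul_I]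
      rw [hacII j k hjk]
      rw [smul_neg, ← neg_smul]
    have hHH : ∀ j k, j ≠ k → H j * H k = -(H k * H j) := by
      intro j k hjk
      rw [hH]
      simp only [smul_mul_assoc, mul_smul_comm, smul_smul, Complex.I_mul_I]
      rw [hacQQ j k hjk]
      rw [smul_neg, ← neg_smul]
    have hGH : ∀ j k, j ≠ k → G j * H k = -(H k * G j) := by
      intro j k hjk
      rw [hG, hH]
      simp only [smul_mul_assoc, mul_smul_comm, smul_smul, Complex.I_mul_I]
      rw [hacIQ j k hjk]
      rw [smul_neg, ← neg_smul]
    obtain ⟨j, c, hc, hHG⟩ := key a ha G H hG2 hH2 hGG hHH hGH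
    have hQI : AQ (ι j) = c • AI (ι j) := by
      have h : Complex.I • AQ (ι j) = Complex.I • (c • AI (ι j)) := by
        rw [show Complex.I • AQ (ι j) = H j from rfl, hHG, hG, smul_comm]
      exact smul_right_injective _ Complex.I_ne_zero h
    apply hNP (ι j)
    rcases hc with rfl | rfl
    · exact ⟨1, by simpa using hQI⟩
    · refine ⟨-1, ?_⟩
      rw [hQI]
      norm_num
  refine ⟨hKle, ?_⟩
  obtain ⟨b, rfl⟩ : ∃ b, a = b + 1 := ⟨a - 1, by omega⟩
  have hb : (b + 1) - 1 = b := by omega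
  rw [hb]
  rw [div_le_div_iff₀ (by positivity) (by positivity)]
  have hcast : (K : ℝ) ≤ 2 * (b + 1) := by exact_mod_cast hKle
  calc (K : ℝ) * 2 ^ b ≤ (2 * (b + 1)) * 2 ^ b := by
        apply mul_le_mul_of_nonneg_right hcast (by positivity)
    _ = ((b + 1 : ℕ) : ℝ) * 2 ^ (b + 1) := by push_cast; ring
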